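/- Let R_1, …, R_m be a Markov partition for f of diameter less than ρ, with transition matrix A, and let a ∈ Σ_A. Then for every N ∈ ℕ, the set K_N(a) = ⋂_{j=-N}^{N} f^{-j}(R_{a_j}) is a nonempty closed rectangle. -/

import Mathlib

open Set Filter Metric Topology

variable {M : Type*} [MetricSpace M] [CompactSpace M]

/-- `f` is expansive with expansivity constant `ρ`: if two orbits stay `ρ`-close for all
integer times, the points coincide. -/
def IsExpansiveWith (f : Equiv.Perm M) (ρ : ℝ) : Prop :=
  ∀ x y : M, (∀ n : ℤ, dist ((f ^ n) x) ((f ^ n) y) ≤ ρ) → x = y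

/-- The stable set `W^s(x)`. -/
def stableSet (f : Equiv.Perm M) (x : M) : Set M :=
  {y : M | Tendsto (fun n : ℤ => dist ((f ^ n) x) ((f ^ n) y)) atTop (𝓝 0)}

/-- The unstable set `W^u(x)`. -/
def unstableSet (f : Equiv.Perm M) (x : M) : Set M :=
  {y : M | Tendsto (fun n : ℤ => dist ((f ^ n) x) ((f ^ n) y)) atBot (𝓝 0)}

/-- The `ε`-stable set `W^s_ε(x)`. -/
def epsStable (f : Equiv.Perm M) (ε : ℝ) (x : M) : Set M :=
  {y : M | ∀ n : ℤ, 0 ≤ n → dist ((f ^ n) x) ((f ^ n) y) ≤ ε}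

/-- The `ε`-unstable set `W^u_ε(x)`. -/
def epsUnstable (f : Equiv.Perm M) (ε : ℝ) (x : M) : Set M :=
  {y : M | ∀ n : ℤ, n ≤ 0 → dist ((f ^ n) x) ((f ^ n) y) ≤ ε}

/-- Shadowing property: every `δ`-pseudo-orbit is `ε`-shadowed by a true orbit. -/
def HasShadowing (f : Equiv.Perm M) : Prop :=
  ∀ ε : ℝ, 0 < ε → ∃ δ : ℝ, 0 < δ ∧ ∀ y : ℤ → M,
    (∀ n : ℤ, dist (f (y n)) (y (n + 1)) < δ) →
      ∃ z : M, ∀ n : ℤ, dist ((f ^ n) z) (y n) ≤ ε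

/-- A rectangle: a nonempty set of diameter `< δ` closed under the bracket operation. -/
def IsRectangle (δ : ℝ) (br : M → M → M) (R : Set M) : Prop :=
  R.Nonempty ∧ Metric.diam R < δ ∧ ∀ x ∈ R, ∀ y ∈ R, br x y ∈ R

/-- Stable border `∂^s R`: points of `R` that are not interior points of
`W^u(x,R) = W^u_ε(x) ∩ R` in the subspace topology of `W^u_ε(x)`. -/
def stableBorder (f : Equiv.Perm M) (ε : ℝ) (R : Set M) : Set M :=
  {x : M | x ∈ R ∧ ¬ ∃ U : Set M, IsOpen U ∧ x ∈ U ∧ U ∩ epsUnstable f ε x ⊆ R}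

/-- Unstable border `∂^u R`: points of `R` that are not interior points of
`W^s(x,R) = W^s_ε(x) ∩ R` in the subspace topology of `W^s_ε(x)`. -/
def unstableBorder (f : Equiv.Perm M) (ε : ℝ) (R : Set M) : Set M :=
  {x : M | x ∈ R ∧ ¬ ∃ U : Set M, IsOpen U ∧ x ∈ U ∧ U ∩ epsStable f ε x ⊆ R}

/-- A Markov partition: a finite family of proper rectangles covering `M`, with pairwise
disjoint interiors, satisfying the Markov inclusions for the invariant fibers. -/
def IsMarkovPartition (f : Equiv.Perm M) (ε δ : ℝ) (br : M → M → M) {m : ℕ}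
    (R : Fin m → Set M) : Prop :=
  (∀ i, IsRectangle δ br (R i)) ∧
  (∀ i, R i = closure (interior (R i))) ∧
  (⋃ i, R i) = Set.univ ∧
  (∀ i j, i ≠ j → interior (R i) ∩ interior (R j) = ∅) ∧
  ∀ i j, ∀ x ∈ interior (R i) ∩ ⇑f ⁻¹' interior (R j),
    ⇑f '' (epsStable f ε x ∩ R i) ⊆ epsStable f ε (f x) ∩ R j ∧
    epsUnstable f ε (f x) ∩ R j ⊆ ⇑f '' (epsUnstable f ε x ∩ R i)

/-- For a Markov partition of diameter less than `ρ` with transition matrix `A`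
and `a ∈ Σ_A`, each finite intersection `K_N(a) = ⋂_{|j| ≤ N} f^{-j}(R_{a_j})` is a nonempty
closed rectangle. -/
theorem stmt_18 (f : Equiv.Perm M) (hf : Continuous ⇑f) (hf' : Continuous ⇑f.symm)
    (ρ ε δ : ℝ) (hρ : 0 < ρ) (hexp : IsExpansiveWith f ρ)
    (hε0 : 0 < ε) (hε : ε ≤ ρ / 4) (hδ : 0 < δ) (br : M → M → M)
    (hbr : ∀ x y : M, dist x y < δ → epsStable f ε x ∩ epsUnstable f ε y = {br x y})
    {m : ℕ} (R : Fin m → Set M) (hMP : IsMarkovPartition f ε δ br R)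
    (hdiam : ∀ i, Metric.diam (R i) < ρ)
    (a : ℤ → Fin m)
    (ha : ∀ i : ℤ, (interior (R (a i)) ∩ ⇑f ⁻¹' interior (R (a (i + 1)))).Nonempty)
    (N : ℕ) :
    IsClosed (⋂ j ∈ Set.Icc (-(N : ℤ)) (N : ℤ), ⇑(f ^ j) ⁻¹' R (a j)) ∧
    IsRectangle δ br (⋂ j ∈ Set.Icc (-(N : ℤ)) (N : ℤ), ⇑(f ^ j) ⁻¹' R (a j)) := by

  obtain ⟨hrect, hproper, hcover, hdisj, hmarkov⟩ := hMP
  -- basic facts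
  have hbound : Bornology.IsBounded (Set.univ : Set M) := isCompact_univ.isBounded
  have hRclosed : ∀ i, IsClosed (R i) := by
    intro i
    rw [hproper i]
    exact isClosed_closure
  have hdistR : ∀ (i : Fin m) (x y : M), x ∈ R i → y ∈ R i → dist x y < δ := by
    intro i x y hx hy
    exact lt_of_le_of_lt
      (Metric.dist_le_diam_of_mem (hbound.subset (Set.subset_univ _)) hx hy) (hrect i).2.1
  have hbr_mem : ∀ x y : M, dist x y < δ →
      br x y ∈ epsStable f ε x ∧ br x y ∈ epsUnstable f ε y := by
    intro x y hd
    have h : br x y ∈ epsStable f ε x ∩ epsUnstable f ε y := by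
      rw [hbr x y hd]
      exact Set.mem_singleton _
    exact ⟨h.1, h.2⟩
  have h2ε : ε + ε ≤ ρ := by linarith
  have hexp2 : ∀ x y : M, (∀ n : ℤ, dist ((f ^ n) x) ((f ^ n) y) ≤ ε + ε) → x = y :=
    fun x y h => hexp x y fun n => le_trans (h n) h2ε
  have hpow_apply : ∀ (n k : ℤ) (x : M), (f ^ n) ((f ^ k) x) = (f ^ (n + k)) x := by
    intro n k x
    rw [zpow_add]
    rfl
  have hpow_f : ∀ (n : ℤ) (x : M), (f ^ n) (f x) = (f ^ (n + 1)) x := by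
    intro n x
    have h1 : (f ^ (1 : ℤ)) x = f x := by rw [zpow_one]
    rw [← h1, hpow_apply]
  have hstep : ∀ (k : ℤ) (x : M), f ((f ^ k) x) = (f ^ (k + 1)) x := by
    intro k x
    have h1 : f ((f ^ k) x) = (f ^ (1 : ℤ)) ((f ^ k) x) := by rw [zpow_one]
    rw [h1, hpow_apply, add_comm 1 k]
  have hsymm_apply : ∀ x : M, f.symm x = (f ^ (-1 : ℤ)) x := by
    intro x
    rw [zpow_neg, zpow_one]
    rfl
  have hstep_symm : ∀ (k : ℤ) (x : M), f.symm ((f ^ k) x) = (f ^ (k - 1)) x := by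
    intro k x
    rw [hsymm_apply, hpow_apply, (by ring : (-1 : ℤ) + k = k - 1)]
  have hcont : ∀ n : ℤ, Continuous ⇑(f ^ n) := by
    intro n
    induction n using Int.induction_on with
    | zero => simpa using continuous_id
    | succ k ih =>
      rw [zpow_add_one, Equiv.Perm.coe_mul]
      exact ih.comp hf
    | pred k ih =>
      rw [zpow_sub_one, Equiv.Perm.coe_mul, Equiv.Perm.inv_def]
      exact ih.comp hf'
  -- Markov property at arbitrary points (stable direction)
  have hEXTs : ∀ (i j : Fin m) (xh : M), xh ∈ interior (R i) → f xh ∈ interior (R j) →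
      ∀ p q : M, p ∈ R i → f p ∈ R j → q ∈ epsStable f ε p → q ∈ R i →
      f q ∈ epsStable f ε (f p) ∧ f q ∈ R j := by
    intro i j xh hx1 hx2 p q hp hfp hqS hqR
    have hq' : br xh q ∈ epsStable f ε xh ∧ br xh q ∈ epsUnstable f ε q :=
      hbr_mem xh q (hdistR i _ _ (interior_subset hx1) hqR)
    have hq'R : br xh q ∈ R i := (hrect i).2.2 xh (interior_subset hx1) q hqR
    have hfq' : f (br xh q) ∈ epsStable f ε (f xh) ∩ R j :=
      (hmarkov i j xh ⟨hx1, hx2⟩).1 ⟨br xh q, ⟨hq'.1, hq'R⟩, rfl⟩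
    have hd2 : dist (f p) (f (br xh q)) < δ := hdistR j _ _ hfp hfq'.2
    have hw : br (f p) (f (br xh q)) ∈ epsStable f ε (f p) ∧
        br (f p) (f (br xh q)) ∈ epsUnstable f ε (f (br xh q)) := hbr_mem _ _ hd2
    have hwR : br (f p) (f (br xh q)) ∈ R j := (hrect j).2.2 _ hfp _ hfq'.2
    have hkey : br (f p) (f (br xh q)) = f q := by
      apply hexp2
      intro n
      rcases le_or_gt 0 n with hn | hn
      · have b1 : dist ((f ^ n) (f p)) ((f ^ n) (br (f p) (f (br xh q)))) ≤ ε := hw.1 n hn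
        have b2 : dist ((f ^ n) (f p)) ((f ^ n) (f q)) ≤ ε := by
          rw [hpow_f, hpow_f]
          exact hqS (n + 1) (by omega)
        have t := dist_triangle ((f ^ n) (br (f p) (f (br xh q)))) ((f ^ n) (f p))
          ((f ^ n) (f q))
        rw [dist_comm] at b1
        linarith
      · have b1 : dist ((f ^ n) (f (br xh q)))
            ((f ^ n) (br (f p) (f (br xh q)))) ≤ ε := hw.2 n (le_of_lt hn)
        have b2 : dist ((f ^ n) (f q)) ((f ^ n) (f (br xh q))) ≤ ε := by
          rw [hpow_f, hpow_f]
          exact hq'.2 (n + 1) (by omega)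
        have t := dist_triangle ((f ^ n) (br (f p) (f (br xh q)))) ((f ^ n) (f (br xh q)))
          ((f ^ n) (f q))
        rw [dist_comm] at b1 b2
        linarith
    exact ⟨hkey ▸ hw.1, hkey ▸ hwR⟩
  -- Markov property at arbitrary points (unstable direction)
  have hEXTu : ∀ (i j : Fin m) (xh : M), xh ∈ interior (R i) → f xh ∈ interior (R j) →
      ∀ p u : M, p ∈ R i → f p ∈ R j → u ∈ epsUnstable f ε (f p) → u ∈ R j →
      f.symm u ∈ epsUnstable f ε p ∧ f.symm u ∈ R i := by
    intro i j xh hx1 hx2 p u hpR hfp huU huR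
    have hu' : br u (f xh) ∈ epsStable f ε u ∧ br u (f xh) ∈ epsUnstable f ε (f xh) :=
      hbr_mem u (f xh) (hdistR j _ _ huR (interior_subset hx2))
    have hu'R : br u (f xh) ∈ R j := (hrect j).2.2 u huR (f xh) (interior_subset hx2)
    obtain ⟨v, ⟨hvU, hvR⟩, hfv⟩ := (hmarkov i j xh ⟨hx1, hx2⟩).2 ⟨hu'.2, hu'R⟩
    have hw : br v p ∈ epsStable f ε v ∧ br v p ∈ epsUnstable f ε p :=
      hbr_mem v p (hdistR i _ _ hvR hpR)
    have hwR : br v p ∈ R i := (hrect i).2.2 v hvR p hpR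
    have hkey : f (br v p) = u := by
      apply hexp2
      intro n
      rcases le_or_gt n (-1) with hn | hn
      · have b1 : dist ((f ^ (n + 1)) p) ((f ^ (n + 1)) (br v p)) ≤ ε := hw.2 (n + 1) (by omega)
        have b2 : dist ((f ^ (n + 1)) p) ((f ^ n) u) ≤ ε := by
          have h3 := huU n (by omega)
          rw [hpow_f] at h3
          exact h3
        have t := dist_triangle ((f ^ (n + 1)) (br v p)) ((f ^ (n + 1)) p) ((f ^ n) u)
        rw [hpow_f]
        rw [dist_comm] at b1
        linarith
      · have b1 : dist ((f ^ (n + 1)) v) ((f ^ (n + 1)) (br v p)) ≤ ε := hw.1 (n + 1) (by omega)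
        have b2 : dist ((f ^ n) u) ((f ^ n) (br u (f xh))) ≤ ε := hu'.1 n (by omega)
        have e : (f ^ (n + 1)) v = (f ^ n) (br u (f xh)) := by
          rw [← hpow_f n v, hfv]
        rw [e] at b1
        have t := dist_triangle ((f ^ (n + 1)) (br v p)) ((f ^ n) (br u (f xh))) ((f ^ n) u)
        rw [hpow_f]
        rw [dist_comm] at b1 b2
        linarith
    have hsymm_eq : f.symm u = br v p := by rw [← hkey, Equiv.symm_apply_apply]
    exact ⟨hsymm_eq ▸ hw.2, hsymm_eq ▸ hwR⟩
  -- forward chaining along stable sets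
  have hCHAINs : ∀ (x z : M) (k : ℤ) (n : ℕ),
      z ∈ epsStable f ε x → z ∈ R (a k) →
      (∀ t : ℕ, t ≤ n → (f ^ (t : ℤ)) x ∈ R (a (k + t))) →
      ∀ t : ℕ, t ≤ n → (f ^ (t : ℤ)) z ∈ epsStable f ε ((f ^ (t : ℤ)) x) ∧
        (f ^ (t : ℤ)) z ∈ R (a (k + t)) := by
    intro x z k n hzS hzR hx t
    induction t with
    | zero =>
      intro _
      simpa using ⟨hzS, hzR⟩
    | succ s ih =>
      intro hs
      obtain ⟨ihS, ihR⟩ := ih (by omega)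
      obtain ⟨xh, hxh1, hxh2⟩ := ha (k + s)
      have hp : (f ^ (s : ℤ)) x ∈ R (a (k + s)) := hx s (by omega)
      have hfp : f ((f ^ (s : ℤ)) x) ∈ R (a (k + s + 1)) := by
        rw [hstep]
        have h1 := hx (s + 1) hs
        rw [(by push_cast; ring : ((s + 1 : ℕ) : ℤ) = (s : ℤ) + 1),
          (by ring : k + ((s : ℤ) + 1) = k + s + 1)] at h1
        exact h1
      have hres := hEXTs _ _ xh hxh1 hxh2 ((f ^ (s : ℤ)) x) ((f ^ (s : ℤ)) z) hp hfp ihS ihR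
      rw [(by push_cast; ring : ((s + 1 : ℕ) : ℤ) = (s : ℤ) + 1),
        (by ring : k + ((s : ℤ) + 1) = k + s + 1), ← hstep (s : ℤ) z, ← hstep (s : ℤ) x]
      exact hres
  -- backward chaining along unstable sets
  have hCHAINu : ∀ (y z : M) (k : ℤ) (n : ℕ),
      z ∈ epsUnstable f ε y → z ∈ R (a k) →
      (∀ t : ℕ, t ≤ n → (f ^ (-(t : ℤ))) y ∈ R (a (k - t))) →
      ∀ t : ℕ, t ≤ n → (f ^ (-(t : ℤ))) z ∈ epsUnstable f ε ((f ^ (-(t : ℤ))) y) ∧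
        (f ^ (-(t : ℤ))) z ∈ R (a (k - t)) := by
    intro y z k n hzU hzR hy t
    induction t with
    | zero =>
      intro _
      simpa using ⟨hzU, hzR⟩
    | succ s ih =>
      intro hs
      obtain ⟨ihU, ihR⟩ := ih (by omega)
      obtain ⟨xh, hxh1, hxh2⟩ := ha (k - s - 1)
      rw [(by ring : k - (s : ℤ) - 1 + 1 = k - s)] at hxh2
      have hpR : (f ^ (-(s : ℤ) - 1)) y ∈ R (a (k - s - 1)) := by
        have h1 := hy (s + 1) hs
        rw [(by push_cast; ring : ((s + 1 : ℕ) : ℤ) = (s : ℤ) + 1),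
          (by ring : -((s : ℤ) + 1) = -(s : ℤ) - 1),
          (by ring : k - ((s : ℤ) + 1) = k - s - 1)] at h1
        exact h1
      have hfpe : f ((f ^ (-(s : ℤ) - 1)) y) = (f ^ (-(s : ℤ))) y := by
        rw [hstep, (by ring : -(s : ℤ) - 1 + 1 = -(s : ℤ))]
      have hfpR : f ((f ^ (-(s : ℤ) - 1)) y) ∈ R (a (k - s)) := by
        rw [hfpe]
        exact hy s (by omega)
      have huU : (f ^ (-(s : ℤ))) z ∈ epsUnstable f ε (f ((f ^ (-(s : ℤ) - 1)) y)) := by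
        rw [hfpe]
        exact ihU
      have hres := hEXTu _ _ xh hxh1 hxh2 ((f ^ (-(s : ℤ) - 1)) y) ((f ^ (-(s : ℤ))) z)
        hpR hfpR huU ihR
      have he : f.symm ((f ^ (-(s : ℤ))) z) = (f ^ (-(s : ℤ) - 1)) z := by rw [hstep_symm]
      rw [he] at hres
      rw [(by push_cast; ring : -((s + 1 : ℕ) : ℤ) = -(s : ℤ) - 1),
        (by push_cast; ring : k - ((s + 1 : ℕ) : ℤ) = k - (s : ℤ) - 1)]
      exact hres
  -- nonemptiness of forward cylinders
  have hNE : ∀ (n : ℕ) (k : ℤ), ∃ z : M, ∀ t : ℕ, t ≤ n → (f ^ (t : ℤ)) z ∈ R (a (k + t)) := by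
    intro n
    induction n with
    | zero =>
      intro k
      obtain ⟨z, hz⟩ := (hrect (a k)).1
      refine ⟨z, fun t ht => ?_⟩
      have h0 : t = 0 := by omega
      subst h0
      simpa using hz
    | succ n ih =>
      intro k
      obtain ⟨z, hz⟩ := ih (k + 1)
      obtain ⟨xh, hxh1, hxh2⟩ := ha k
      have hzR : z ∈ R (a (k + 1)) := by
        have h1 := hz 0 (by omega)
        simpa using h1
      have hfxhR : f xh ∈ R (a (k + 1)) := interior_subset hxh2
      have hbrm := hbr_mem z (f xh) (hdistR _ _ _ hzR hfxhR)
      have huR : br z (f xh) ∈ R (a (k + 1)) := (hrect _).2.2 z hzR (f xh) hfxhR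
      have hv := hEXTu (a k) (a (k + 1)) xh hxh1 hxh2 xh (br z (f xh))
        (interior_subset hxh1) hfxhR hbrm.2 huR
      have hchain := hCHAINs z (br z (f xh)) (k + 1) n hbrm.1 huR hz
      refine ⟨f.symm (br z (f xh)), fun t ht => ?_⟩
      cases t with
      | zero => simpa using hv.2
      | succ s =>
        rw [(by push_cast; ring : ((s + 1 : ℕ) : ℤ) = (s : ℤ) + 1)]
        have e : (f ^ ((s : ℤ) + 1)) (f.symm (br z (f xh))) = (f ^ (s : ℤ)) (br z (f xh)) := by
          rw [hsymm_apply, hpow_apply, (by ring : (s : ℤ) + 1 + -1 = (s : ℤ))]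
        rw [e, (by ring : k + ((s : ℤ) + 1) = k + 1 + (s : ℤ))]
        exact (hchain s (by omega)).2
  -- assembling
  constructor
  · exact isClosed_biInter fun j _ => (hRclosed (a j)).preimage (hcont j)
  · have hsub : (⋂ j ∈ Set.Icc (-(N : ℤ)) (N : ℤ), ⇑(f ^ j) ⁻¹' R (a j)) ⊆ R (a 0) := by
      intro z hz
      simp only [Set.mem_iInter, Set.mem_preimage, Set.mem_Icc] at hz
      have h1 := hz 0 ⟨by omega, by omega⟩
      simpa using h1
    refine ⟨?_, ?_, ?_⟩
    · obtain ⟨z, hz⟩ := hNE (2 * N) (-(N : ℤ))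
      refine ⟨(f ^ (N : ℤ)) z, ?_⟩
      simp only [Set.mem_iInter, Set.mem_preimage, Set.mem_Icc]
      intro j hj
      have ej : j + (N : ℤ) = (((j + N).toNat : ℕ) : ℤ) := by omega
      rw [hpow_apply, ej]
      have h2 := hz (j + N).toNat (by omega)
      rw [(by omega : -(N : ℤ) + (((j + N).toNat : ℕ) : ℤ) = j)] at h2
      exact h2
    · exact lt_of_le_of_lt
        (Metric.diam_mono hsub (hbound.subset (Set.subset_univ _))) (hrect (a 0)).2.1
    · intro x hx y hy
      simp only [Set.mem_iInter, Set.mem_preimage, Set.mem_Icc] at hx hy ⊢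
      have hx0 : x ∈ R (a 0) := by
        have h1 := hx 0 ⟨by omega, by omega⟩
        simpa using h1
      have hy0 : y ∈ R (a 0) := by
        have h1 := hy 0 ⟨by omega, by omega⟩
        simpa using h1
      have hbrm := hbr_mem x y (hdistR (a 0) _ _ hx0 hy0)
      have hbrR : br x y ∈ R (a 0) := (hrect _).2.2 x hx0 y hy0
      have hfwd := hCHAINs x (br x y) 0 N hbrm.1 hbrR (fun t ht => by
        rw [zero_add]
        exact hx (t : ℤ) ⟨by omega, by omega⟩)
      have hbwd := hCHAINu y (br x y) 0 N hbrm.2 hbrR (fun t ht => by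
        rw [zero_sub]
        exact hy (-(t : ℤ)) ⟨by omega, by omega⟩)
      intro j hj
      rcases le_or_gt 0 j with h0 | h0
      · have h2 := (hfwd j.toNat (by omega)).2
        rw [(by omega : ((j.toNat : ℕ) : ℤ) = j), zero_add] at h2
        exact h2
      · have h2 := (hbwd (-j).toNat (by omega)).2
        rw [(by omega : -(((-j).toNat : ℕ) : ℤ) = j),
          (by omega : (0 : ℤ) - (((-j).toNat : ℕ) : ℤ) = j)] at h2
        exact h2
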